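/- Let a > 3 and let τ_a(r) = [(a₊² − a₋²) log r − (r² − a₋²) log a₊ − (a₊² − r²) log a₋] / (4 log a₊ − 4 log a₋) with a₋ = a−3, a₊ = a+3. Then as a → ∞, the translated functions r ↦ τ_a(r + a − 4) converge uniformly on [1,7] to the function τ̄(r) = (9 − (r−4)²)/2, which satisfies τ̄'' + 1 = 0 on (1,7) with τ̄(1) = τ̄(7) = 0. -/

import Mathlib

open Real Set Filter

lemma hd1 (a c s : ℝ) (hs : 0 < a + s) :
    HasDerivAt (fun t => 2*Real.log (a+t) - (1+t/3)*Real.log (a+3) - (1-t/3)*Real.log (a-3) - (9-t^2)*c)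
      (2*(a+s)⁻¹ - Real.log (a+3)/3 + Real.log (a-3)/3 + 2*s*c) s := by
  have h1 : HasDerivAt (fun t : ℝ => a + t) 1 s := (hasDerivAt_id s).const_add a
  have h2 := (h1.log hs.ne').const_mul 2
  have h3 : HasDerivAt (fun t : ℝ => (1+t/3)*Real.log (a+3)) ((1/3)*Real.log (a+3)) s := by
    simpa using (((hasDerivAt_id s).div_const 3).const_add 1).mul_const (Real.log (a+3))
  have h4 : HasDerivAt (fun t : ℝ => (1-t/3)*Real.log (a-3)) ((-(1/3))*Real.log (a-3)) s := by
    simpa using ((((hasDerivAt_id s).div_const 3).const_sub 1)).mul_const (Real.log (a-3))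
  have h5 : HasDerivAt (fun t : ℝ => (9-t^2)*c) ((-(2*s))*c) s := by
    simpa using (((hasDerivAt_pow 2 s)).const_sub 9).mul_const c
  refine HasDerivAt.congr_deriv (((h2.sub h3).sub h4).sub h5) ?_
  field_simp
  ring

lemma hd2 (a c s : ℝ) (hs : 0 < a + s) :
    HasDerivAt (fun t => 2*(a+t)⁻¹ - Real.log (a+3)/3 + Real.log (a-3)/3 + 2*t*c)
      (-2/(a+s)^2 + 2*c) s := by
  have h1 : HasDerivAt (fun t : ℝ => a + t) 1 s := (hasDerivAt_id s).const_add a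
  have h2 := (h1.inv hs.ne').const_mul 2
  have h5 : HasDerivAt (fun t : ℝ => 2*t*c) (2*c) s := by
    simpa using ((hasDerivAt_id s).const_mul 2).mul_const c
  refine HasDerivAt.congr_deriv (((h2.sub_const _).add_const _).add h5) ?_
  field_simp

-- second-derivative data on Icc (-3) 3, for a > 3 (so a+s > 0 on Icc)
lemma deriv_data (a c : ℝ) (ha : 3 < a) :
    ContinuousOn (fun t => 2*Real.log (a+t) - (1+t/3)*Real.log (a+3) - (1-t/3)*Real.log (a-3) - (9-t^2)*c) (Icc (-3:ℝ) 3)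
    ∧ DifferentiableOn ℝ (fun t => 2*Real.log (a+t) - (1+t/3)*Real.log (a+3) - (1-t/3)*Real.log (a-3) - (9-t^2)*c) (interior (Icc (-3:ℝ) 3))
    ∧ DifferentiableOn ℝ (deriv (fun t => 2*Real.log (a+t) - (1+t/3)*Real.log (a+3) - (1-t/3)*Real.log (a-3) - (9-t^2)*c)) (interior (Icc (-3:ℝ) 3))
    ∧ ∀ x ∈ interior (Icc (-3:ℝ) 3),
        deriv^[2] (fun t => 2*Real.log (a+t) - (1+t/3)*Real.log (a+3) - (1-t/3)*Real.log (a-3) - (9-t^2)*c) x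
          = -2/(a+x)^2 + 2*c := by
  set f := fun t => 2*Real.log (a+t) - (1+t/3)*Real.log (a+3) - (1-t/3)*Real.log (a-3) - (9-t^2)*c with hf
  set f' := fun t => 2*(a+t)⁻¹ - Real.log (a+3)/3 + Real.log (a-3)/3 + 2*t*c with hf'
  have hpos : ∀ x ∈ Ioi (-a), 0 < a + x := fun x hx => by
    simp only [mem_Ioi] at hx; linarith
  have hsub : Icc (-3:ℝ) 3 ⊆ Ioi (-a) := fun x hx => by
    simp only [mem_Icc] at hx; simp only [mem_Ioi]; linarith [hx.1]
  have hopen : IsOpen (Ioi (-a)) := isOpen_Ioi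
  have hderiv_eq : ∀ x ∈ Ioi (-a), deriv f x = f' x := fun x hx =>
    (hd1 a c x (hpos x hx)).deriv
  have hcont : ContinuousOn f (Icc (-3:ℝ) 3) := fun x hx =>
    ((hd1 a c x (hpos x (hsub hx))).differentiableAt.continuousAt).continuousWithinAt
  have hdiff : DifferentiableOn ℝ f (interior (Icc (-3:ℝ) 3)) := fun x hx =>
    ((hd1 a c x (hpos x (hsub (interior_subset hx)))).differentiableAt).differentiableWithinAt
  have hdf_eventually : ∀ x ∈ Ioi (-a), deriv f =ᶠ[nhds x] f' := fun x hx =>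
    Filter.eventuallyEq_of_mem (hopen.mem_nhds hx) hderiv_eq
  have hdiff2 : DifferentiableOn ℝ (deriv f) (interior (Icc (-3:ℝ) 3)) := fun x hx => by
    have hx' := hsub (interior_subset hx)
    have hfa : DifferentiableAt ℝ f' x := (hd2 a c x (hpos x hx')).differentiableAt
    exact (hfa.congr_of_eventuallyEq (hdf_eventually x hx')).differentiableWithinAt
  refine ⟨hcont, hdiff, hdiff2, fun x hx => ?_⟩
  have hx' := hsub (interior_subset hx)
  have : deriv (deriv f) x = deriv f' x := (hdf_eventually x hx').deriv_eq
  have h2 : deriv f' x = -2/(a+x)^2 + 2*c := (hd2 a c x (hpos x hx')).deriv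
  simp only [Function.iterate_succ, Function.iterate_zero, Function.comp_apply, Function.id_def]
  rw [this, h2]


lemma g_bounds (a : ℝ) (ha : 3 < a) (s : ℝ) (hs : s ∈ Icc (-3:ℝ) 3) :
    (9 - s^2)*((a+3)^2)⁻¹ ≤ 2*Real.log (a+s) - (1+s/3)*Real.log (a+3) - (1-s/3)*Real.log (a-3)
    ∧ 2*Real.log (a+s) - (1+s/3)*Real.log (a+3) - (1-s/3)*Real.log (a-3) ≤ (9 - s^2)*((a-3)^2)⁻¹ := by
  obtain ⟨hs1, hs2⟩ := hs
  have hseg : s ∈ segment ℝ (-3:ℝ) 3 := by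
    rw [segment_eq_Icc (by norm_num : (-3:ℝ) ≤ 3)]; exact ⟨hs1, hs2⟩
  have hm3 : (-3:ℝ) ∈ Icc (-3:ℝ) 3 := by norm_num
  have hp3 : (3:ℝ) ∈ Icc (-3:ℝ) 3 := by norm_num
  have hendL : ∀ c : ℝ, 2*Real.log (a+(-3:ℝ)) - (1+(-3:ℝ)/3)*Real.log (a+3) - (1-(-3:ℝ)/3)*Real.log (a-3) - (9-(-3:ℝ)^2)*c = 0 := by
    intro c
    rw [show a + (-3:ℝ) = a - 3 by ring]
    ring
  have hendR : ∀ c : ℝ, 2*Real.log (a+(3:ℝ)) - (1+(3:ℝ)/3)*Real.log (a+3) - (1-(3:ℝ)/3)*Real.log (a-3) - (9-(3:ℝ)^2)*c = 0 := by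
    intro c; ring
  constructor
  · -- concave comparison with c' = ((a+3)^2)⁻¹
    set c := ((a+3)^2)⁻¹ with hc
    obtain ⟨h1, h2, h3, h4⟩ := deriv_data a c ha
    have hconc : ConcaveOn ℝ (Icc (-3:ℝ) 3)
        (fun t => 2*Real.log (a+t) - (1+t/3)*Real.log (a+3) - (1-t/3)*Real.log (a-3) - (9-t^2)*c) := by
      apply concaveOn_of_deriv2_nonpos (convex_Icc _ _) h1 h2 h3
      intro x hx
      rw [h4 x hx]
      rw [interior_Icc] at hx
      have hax : 0 < a + x := by cases' hx with hx1 hx2; linarith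
      have hax3 : a + x ≤ a + 3 := by cases' hx with hx1 hx2; linarith
      have : (a+x)^2 ≤ (a+3)^2 := by nlinarith
      have h5 : c ≤ ((a+x)^2)⁻¹ := by
        rw [hc]; exact inv_anti₀ (by positivity) this
      have h6 : 2*c ≤ 2/(a+x)^2 := by rw [div_eq_mul_inv]; linarith
      have h7 : (-2)/(a+x)^2 = -(2/(a+x)^2) := by ring
      rw [h7]; linarith
    have hthis := hconc.ge_on_segment hm3 hp3 hseg
    rw [hendL c, hendR c] at hthis
    simp only [min_self] at hthis
    linarith [hthis]
  · set c := ((a-3)^2)⁻¹ with hc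
    obtain ⟨h1, h2, h3, h4⟩ := deriv_data a c ha
    have hconv : ConvexOn ℝ (Icc (-3:ℝ) 3)
        (fun t => 2*Real.log (a+t) - (1+t/3)*Real.log (a+3) - (1-t/3)*Real.log (a-3) - (9-t^2)*c) := by
      apply convexOn_of_deriv2_nonneg (convex_Icc _ _) h1 h2 h3
      intro x hx
      rw [h4 x hx]
      rw [interior_Icc] at hx
      have ha3 : (0:ℝ) < a - 3 := by linarith
      have hax3 : a - 3 ≤ a + x := by cases' hx with hx1 hx2; linarith
      have : (a-3)^2 ≤ (a+x)^2 := by nlinarith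
      have h5 : ((a+x)^2)⁻¹ ≤ c := by
        rw [hc]; exact inv_anti₀ (by positivity) this
      have h6 : 2/(a+x)^2 ≤ 2*c := by rw [div_eq_mul_inv]; linarith
      have h7 : (-2)/(a+x)^2 = -(2/(a+x)^2) := by ring
      rw [h7]; linarith
    have hthis := hconv.le_on_segment hm3 hp3 hseg
    rw [hendL c, hendR c] at hthis
    simp only [max_self] at hthis
    linarith [hthis]


lemma L_bounds (a : ℝ) (ha : 3 < a) :
    6/(a+3) ≤ Real.log (a+3) - Real.log (a-3) ∧ Real.log (a+3) - Real.log (a-3) ≤ 6/(a-3) := by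
  have h1 : (0:ℝ) < a - 3 := by linarith
  have h2 : (0:ℝ) < a + 3 := by linarith
  have e1 : Real.log ((a+3)/(a-3)) = Real.log (a+3) - Real.log (a-3) :=
    Real.log_div h2.ne' h1.ne'
  have e2 : Real.log ((a-3)/(a+3)) = Real.log (a-3) - Real.log (a+3) :=
    Real.log_div h1.ne' h2.ne'
  constructor
  · have := Real.log_le_sub_one_of_pos (div_pos h1 h2)
    rw [e2] at this
    have e3 : (a-3)/(a+3) - 1 = -(6/(a+3)) := by field_simp; ring_nf
    linarith [e3 ▸ this]
  · have := Real.log_le_sub_one_of_pos (div_pos h2 h1)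
    rw [e1] at this
    have e3 : (a+3)/(a-3) - 1 = 6/(a-3) := by field_simp; ring_nf
    linarith [e3 ▸ this]

lemma identity (a r : ℝ) (ha : 3 < a) (hx : 0 < r + a - 4) :
    (((a + 3) ^ 2 - (a - 3) ^ 2) * Real.log (r + a - 4)
          - ((r + a - 4) ^ 2 - (a - 3) ^ 2) * Real.log (a + 3)
          - ((a + 3) ^ 2 - (r + a - 4) ^ 2) * Real.log (a - 3))
        / (4 * Real.log (a + 3) - 4 * Real.log (a - 3))
    = (9 - (r-4)^2)/4
      + (3*a/(2*(Real.log (a+3) - Real.log (a-3))))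
        * (2*Real.log (r+a-4) - (1+(r-4)/3)*Real.log (a+3) - (1-(r-4)/3)*Real.log (a-3)) := by
  have h1 : (0:ℝ) < a - 3 := by linarith
  have h2 : (0:ℝ) < a + 3 := by linarith
  have hlt : Real.log (a-3) < Real.log (a+3) := Real.log_lt_log h1 (by linarith)
  have hL : Real.log (a+3) - Real.log (a-3) ≠ 0 := by linarith
  have hL4 : 4*Real.log (a+3) - 4*Real.log (a-3) ≠ 0 := by intro h; apply hL; linarith
  have hL2 : 2*(Real.log (a+3) - Real.log (a-3)) ≠ 0 := by intro h; apply hL; linarith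
  rw [div_eq_iff hL4]
  field_simp [hL]
  ring



set_option maxHeartbeats 2000000 in
/-- the recentered torsion functions `r ↦ τ_a(r + a - 4)` converge uniformly on
`[1,7]`, as `a → ∞`, to `τ̄(r) = (9 - (r-4)²)/2`, which solves `τ̄'' + 1 = 0` on `(1,7)`
with `τ̄(1) = τ̄(7) = 0`. -/
theorem stmt2 :
    TendstoUniformlyOn
      (fun (a : ℝ) (r : ℝ) =>
        (((a + 3) ^ 2 - (a - 3) ^ 2) * Real.log (r + a - 4)
          - ((r + a - 4) ^ 2 - (a - 3) ^ 2) * Real.log (a + 3)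
          - ((a + 3) ^ 2 - (r + a - 4) ^ 2) * Real.log (a - 3))
        / (4 * Real.log (a + 3) - 4 * Real.log (a - 3)))
      (fun r => (9 - (r - 4) ^ 2) / 2) atTop (Icc 1 7)
    ∧ (∀ r ∈ Ioo (1 : ℝ) 7,
        deriv (deriv (fun s : ℝ => (9 - (s - 4) ^ 2) / 2)) r + 1 = 0)
    ∧ (9 - ((1 : ℝ) - 4) ^ 2) / 2 = 0 ∧ (9 - ((7 : ℝ) - 4) ^ 2) / 2 = 0 := by
  constructor
  · rw [Metric.tendstoUniformlyOn_iff]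
    intro eps heps
    filter_upwards [eventually_ge_atTop (max 6 (162/eps))] with a haa
    intro r hr
    have ha6 : (6:ℝ) ≤ a := le_trans (le_max_left _ _) haa
    have ha2 : 162/eps ≤ a := le_trans (le_max_right _ _) haa
    have ha3 : (3:ℝ) < a := by linarith
    have h1 : (0:ℝ) < a - 3 := by linarith
    have h2 : (0:ℝ) < a + 3 := by linarith
    obtain ⟨hr1, hr7⟩ := hr
    have hx : 0 < r + a - 4 := by linarith
    have hsI : r - 4 ∈ Icc (-3:ℝ) 3 := Set.mem_Icc.mpr ⟨by linarith, by linarith⟩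
    have hs9 : 0 ≤ 9 - (r-4)^2 := by nlinarith
    have hgb := g_bounds a ha3 (r-4) hsI
    rw [show a + (r-4) = r + a - 4 by ring] at hgb
    obtain ⟨hLl, hLu⟩ := L_bounds a ha3
    have hLpos : 0 < Real.log (a+3) - Real.log (a-3) := lt_of_lt_of_le (by positivity) hLl
    have hG0 : 0 ≤ 2*Real.log (r+a-4) - (1+(r-4)/3)*Real.log (a+3) - (1-(r-4)/3)*Real.log (a-3) :=
      le_trans (mul_nonneg hs9 (by positivity)) hgb.1
    have hCu : 3*a/(2*(Real.log (a+3) - Real.log (a-3))) ≤ a*(a+3)/4 := by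
      rw [div_le_iff₀ (by positivity)]
      have hstep : a*(a+3)/4 * (2*(6/(a+3))) ≤ a*(a+3)/4 * (2*(Real.log (a+3) - Real.log (a-3))) := by
        apply mul_le_mul_of_nonneg_left (by linarith) (by positivity)
      have e : a*(a+3)/4 * (2*(6/(a+3))) = 3*a := by field_simp; ring
      linarith [e ▸ hstep]
    have hCl : a*(a-3)/4 ≤ 3*a/(2*(Real.log (a+3) - Real.log (a-3))) := by
      rw [le_div_iff₀ (by positivity)]
      have hstep : a*(a-3)/4 * (2*(Real.log (a+3) - Real.log (a-3))) ≤ a*(a-3)/4 * (2*(6/(a-3))) := by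
        apply mul_le_mul_of_nonneg_left (by linarith) (by positivity)
      have e : a*(a-3)/4 * (2*(6/(a-3))) = 3*a := by field_simp; ring
      linarith [e ▸ hstep]
    have hPu : (3*a/(2*(Real.log (a+3) - Real.log (a-3))))
          * (2*Real.log (r+a-4) - (1+(r-4)/3)*Real.log (a+3) - (1-(r-4)/3)*Real.log (a-3))
        ≤ (a*(a+3)/4) * ((9-(r-4)^2)*((a-3)^2)⁻¹) :=
      mul_le_mul hCu hgb.2 hG0 (by positivity)
    have hPl : (a*(a-3)/4) * ((9-(r-4)^2)*((a+3)^2)⁻¹)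
        ≤ (3*a/(2*(Real.log (a+3) - Real.log (a-3))))
          * (2*Real.log (r+a-4) - (1+(r-4)/3)*Real.log (a+3) - (1-(r-4)/3)*Real.log (a-3)) :=
      mul_le_mul hCl hgb.1 (mul_nonneg hs9 (by positivity)) (by positivity)
    have hub : (a*(a+3)/4) * ((9-(r-4)^2)*((a-3)^2)⁻¹) - (9-(r-4)^2)/4 ≤ 81/a := by
      have e : (a*(a+3)/4) * ((9-(r-4)^2)*((a-3)^2)⁻¹) - (9-(r-4)^2)/4
          = ((9-(r-4)^2)*(9*a-9))/(4*(a-3)^2) := by field_simp; ring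
      rw [e, div_le_div_iff₀ (by positivity) (by linarith)]
      nlinarith [mul_nonneg (mul_nonneg (sq_nonneg (r-4)) (by linarith : (0:ℝ) ≤ 9*a-9))
          (by linarith : (0:ℝ) ≤ a),
        mul_nonneg (by linarith : (0:ℝ) ≤ a-6) (by linarith : (0:ℝ) ≤ 3*a-5)]
    have hlb : (9-(r-4)^2)/4 - (a*(a-3)/4) * ((9-(r-4)^2)*((a+3)^2)⁻¹) ≤ 81/a := by
      have e : (9-(r-4)^2)/4 - (a*(a-3)/4) * ((9-(r-4)^2)*((a+3)^2)⁻¹)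
          = ((9-(r-4)^2)*(9*a+9))/(4*(a+3)^2) := by field_simp; ring
      rw [e, div_le_div_iff₀ (by positivity) (by linarith)]
      nlinarith [mul_nonneg (mul_nonneg (sq_nonneg (r-4)) (by linarith : (0:ℝ) ≤ 9*a+9))
          (by linarith : (0:ℝ) ≤ a), sq_nonneg a]
    have hid := identity a r ha3 hx
    rw [Real.dist_eq, hid]
    have hfin : 81/a < eps := by
      rw [div_lt_iff₀ (by linarith : (0:ℝ) < a)]
      have := (div_le_iff₀ heps).mp ha2
      nlinarith
    calc |(9 - (r - 4) ^ 2) / 2 - ((9 - (r-4)^2)/4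
          + (3*a/(2*(Real.log (a+3) - Real.log (a-3))))
            * (2*Real.log (r+a-4) - (1+(r-4)/3)*Real.log (a+3) - (1-(r-4)/3)*Real.log (a-3)))|
        ≤ 81/a := by rw [abs_le]; constructor <;> linarith
      _ < eps := hfin
  refine ⟨?_, by norm_num, by norm_num⟩
  intro r hr
  have hderiv1 : deriv (fun s : ℝ => (9 - (s - 4) ^ 2) / 2) = fun s => 4 - s := by
    funext x
    have h : HasDerivAt (fun s : ℝ => (9 - (s - 4) ^ 2) / 2) (4 - x) x := by
      have := ((((hasDerivAt_id x).sub_const 4).pow 2).const_sub 9).div_const 2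
      refine this.congr_deriv ?_
      simp
      ring
    exact h.deriv
  rw [hderiv1]
  have h2 : deriv (fun s : ℝ => 4 - s) r = -1 := by
    have : HasDerivAt (fun s : ℝ => 4 - s) (-1) r := by
      simpa using (hasDerivAt_id r).const_sub 4
    exact this.deriv
  rw [h2]
  norm_num
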